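/- Let 𝔤 be a Lie algebra and v ∈ ℂ. The map φ_{1,v}: S(𝔤[[t]]) → S(𝔤[[t]]) determined on generators by x[m] ↦ x[m] + Σ_{k≥1} (-1)^k v^k x[m+k] is an isomorphism of Poisson algebras from (S(𝔤[[t]]), {·,·}₀) to (S(𝔤[[t]]), {·,·}₀ + v{·,·}₁), with inverse determined by x[m] ↦ x[m] + v·x[m+1]. -/

import Mathlib

open MvPolynomial

/-- The image in `S(𝔤[t])` (polynomials in variables `x_a[k]`) of `x ⊗ tᵏ`. -/
noncomputable def lin {ι L : Type*} [LieRing L] [LieAlgebra ℂ L]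
    (b : Module.Basis ι ℂ L) (x : L) (k : ℕ) : MvPolynomial (ι × ℕ) ℂ :=
  (b.repr x).sum fun a c => MvPolynomial.C c * MvPolynomial.X (a, k)

/-- The biderivation bracket on `S(𝔤[t])` with `{x[n],y[m]} = [x,y][n+m+s]`. -/
noncomputable def br {ι L : Type*} [DecidableEq ι] [LieRing L] [LieAlgebra ℂ L]
    (b : Module.Basis ι ℂ L) (s : ℕ) (f g : MvPolynomial (ι × ℕ) ℂ) :
    MvPolynomial (ι × ℕ) ℂ :=
  ∑ p ∈ f.vars, ∑ q ∈ g.vars,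
    pderiv p f * pderiv q g * lin b ⁅b p.1, b q.1⁆ (p.2 + q.2 + s)

section Aux

variable {ι L : Type*} [DecidableEq ι] [LieRing L] [LieAlgebra ℂ L] (b : Module.Basis ι ℂ L)

lemma br_eq_sum (s : ℕ) (f g : MvPolynomial (ι × ℕ) ℂ) {S T : Finset (ι × ℕ)}
    (hS : f.vars ⊆ S) (hT : g.vars ⊆ T) :
    br b s f g = ∑ p ∈ S, ∑ q ∈ T,
      pderiv p f * pderiv q g * lin b ⁅b p.1, b q.1⁆ (p.2 + q.2 + s) := by
  unfold br
  have inner : ∀ p : ι × ℕ,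
      ∑ q ∈ g.vars, pderiv p f * pderiv q g * lin b ⁅b p.1, b q.1⁆ (p.2 + q.2 + s)
        = ∑ q ∈ T, pderiv p f * pderiv q g * lin b ⁅b p.1, b q.1⁆ (p.2 + q.2 + s) := fun p =>
    Finset.sum_subset hT fun q _ hq => by
      rw [pderiv_eq_zero_of_notMem_vars hq, mul_zero, zero_mul]
  simp_rw [inner]
  exact Finset.sum_subset hS fun p _ hp => Finset.sum_eq_zero fun q _ => by
    rw [pderiv_eq_zero_of_notMem_vars hp, zero_mul, zero_mul]

lemma br_add_left (s : ℕ) (f f' g : MvPolynomial (ι × ℕ) ℂ) :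
    br b s (f + f') g = br b s f g + br b s f' g := by
  rw [br_eq_sum b s (f + f') g (vars_add_subset f f') Finset.Subset.rfl,
    br_eq_sum b s f g Finset.subset_union_left Finset.Subset.rfl,
    br_eq_sum b s f' g Finset.subset_union_right Finset.Subset.rfl,
    ← Finset.sum_add_distrib]
  refine Finset.sum_congr rfl fun p _ => ?_
  rw [← Finset.sum_add_distrib]
  refine Finset.sum_congr rfl fun q _ => ?_
  rw [map_add]; ring

lemma br_add_right (s : ℕ) (f g g' : MvPolynomial (ι × ℕ) ℂ) :
    br b s f (g + g') = br b s f g + br b s f g' := by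
  rw [br_eq_sum b s f (g + g') Finset.Subset.rfl (vars_add_subset g g'),
    br_eq_sum b s f g Finset.Subset.rfl Finset.subset_union_left,
    br_eq_sum b s f g' Finset.Subset.rfl Finset.subset_union_right,
    ← Finset.sum_add_distrib]
  refine Finset.sum_congr rfl fun p _ => ?_
  rw [← Finset.sum_add_distrib]
  refine Finset.sum_congr rfl fun q _ => ?_
  rw [map_add]; ring

lemma vars_smul_subset (c : ℂ) (f : MvPolynomial (ι × ℕ) ℂ) : (c • f).vars ⊆ f.vars := by
  rw [smul_eq_C_mul]
  exact (vars_mul _ _).trans (by simp [vars_C])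

lemma br_smul_left (s : ℕ) (c : ℂ) (f g : MvPolynomial (ι × ℕ) ℂ) :
    br b s (c • f) g = c • br b s f g := by
  rw [br_eq_sum b s (c • f) g (vars_smul_subset c f) Finset.Subset.rfl]
  unfold br
  rw [Finset.smul_sum]
  refine Finset.sum_congr rfl fun p _ => ?_
  rw [Finset.smul_sum]
  refine Finset.sum_congr rfl fun q _ => ?_
  rw [(pderiv p).map_smul, smul_mul_assoc, smul_mul_assoc]

lemma br_smul_right (s : ℕ) (c : ℂ) (f g : MvPolynomial (ι × ℕ) ℂ) :
    br b s f (c • g) = c • br b s f g := by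
  rw [br_eq_sum b s f (c • g) Finset.Subset.rfl (vars_smul_subset c g)]
  unfold br
  rw [Finset.smul_sum]
  refine Finset.sum_congr rfl fun p _ => ?_
  rw [Finset.smul_sum]
  refine Finset.sum_congr rfl fun q _ => ?_
  rw [(pderiv q).map_smul, mul_smul_comm, smul_mul_assoc]

lemma br_mul_left (s : ℕ) (f f' g : MvPolynomial (ι × ℕ) ℂ) :
    br b s (f * f') g = f * br b s f' g + f' * br b s f g := by
  rw [br_eq_sum b s (f * f') g (vars_mul f f') Finset.Subset.rfl,
    br_eq_sum b s f g Finset.subset_union_left Finset.Subset.rfl,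
    br_eq_sum b s f' g Finset.subset_union_right Finset.Subset.rfl,
    Finset.mul_sum, Finset.mul_sum, ← Finset.sum_add_distrib]
  refine Finset.sum_congr rfl fun p _ => ?_
  rw [Finset.mul_sum, Finset.mul_sum, ← Finset.sum_add_distrib]
  refine Finset.sum_congr rfl fun q _ => ?_
  rw [pderiv_mul]; ring

lemma br_mul_right (s : ℕ) (f g g' : MvPolynomial (ι × ℕ) ℂ) :
    br b s f (g * g') = g * br b s f g' + g' * br b s f g := by
  rw [br_eq_sum b s f (g * g') Finset.Subset.rfl (vars_mul g g'),
    br_eq_sum b s f g Finset.Subset.rfl Finset.subset_union_left,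
    br_eq_sum b s f g' Finset.Subset.rfl Finset.subset_union_right,
    Finset.mul_sum, Finset.mul_sum, ← Finset.sum_add_distrib]
  refine Finset.sum_congr rfl fun p _ => ?_
  rw [Finset.mul_sum, Finset.mul_sum, ← Finset.sum_add_distrib]
  refine Finset.sum_congr rfl fun q _ => ?_
  rw [pderiv_mul]; ring

lemma br_C_left (s : ℕ) (c : ℂ) (g : MvPolynomial (ι × ℕ) ℂ) : br b s (C c) g = 0 := by
  simp [br, vars_C]

lemma br_C_right (s : ℕ) (c : ℂ) (f : MvPolynomial (ι × ℕ) ℂ) : br b s f (C c) = 0 := by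
  simp [br, vars_C]

lemma br_X_X (s : ℕ) (p q : ι × ℕ) :
    br b s (X p) (X q) = lin b ⁅b p.1, b q.1⁆ (p.2 + q.2 + s) := by
  simp [br, vars_X, pderiv_X_self]

end Aux


lemma tele {M : Type*} [AddCommGroup M] [Module ℂ M] (c : ℂ) (n : ℕ) (G : ℕ → M) :
    (∑ k ∈ Finset.range (n + 1), (-c) ^ k • G k)
      + c • ∑ k ∈ Finset.range (n + 1), (-c) ^ k • G (k + 1)
      = G 0 - (-c) ^ (n + 1) • G (n + 1) := by
  rw [Finset.smul_sum]
  have h1 : ∀ k, c • ((-c) ^ k • G (k + 1)) = -((-c) ^ (k + 1) • G (k + 1)) := by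
    intro k
    rw [smul_smul, ← neg_smul]
    congr 1
    ring
  simp_rw [h1]
  rw [Finset.sum_neg_distrib]
  have h2 : ∑ k ∈ Finset.range (n + 1), (-c) ^ (k + 1) • G (k + 1)
      = (∑ k ∈ Finset.range (n + 1), (-c) ^ k • G k) + (-c) ^ (n + 1) • G (n + 1)
        - (-c) ^ 0 • G 0 := by
    rw [← Finset.sum_range_succ (fun k => (-c) ^ k • G k) (n + 1),
      Finset.sum_range_succ' (fun k => (-c) ^ k • G k) (n + 1)]
    abel
  rw [h2, pow_zero, one_smul]
  abel

section Psi
variable {ι L : Type*} [DecidableEq ι] [LieRing L] [LieAlgebra ℂ L] (b : Module.Basis ι ℂ L)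
variable (v : ℂ) (ψ : MvPolynomial (ι × ℕ) ℂ →ₐ[ℂ] MvPolynomial (ι × ℕ) ℂ)

lemma psi_C (c : ℂ) : ψ (C c) = C c := by
  simpa [algebraMap_eq] using ψ.commutes c

variable (hψ : ∀ p : ι × ℕ, ψ (X p) = X p + v • X (p.1, p.2 + 1))
include hψ

lemma psi_lin (x : L) (k : ℕ) : ψ (lin b x k) = lin b x k + v • lin b x (k + 1) := by
  unfold lin
  rw [map_finsuppSum, Finsupp.smul_sum, ← Finsupp.sum_add]
  refine Finsupp.sum_congr fun a _ => ?_
  rw [map_mul, psi_C, hψ, mul_add, mul_smul_comm]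

lemma keyXX (p q : ι × ℕ) :
    ψ (br b 0 (X p) (X q) + v • br b 1 (X p) (X q)) = br b 0 (ψ (X p)) (ψ (X q)) := by
  rw [br_X_X, br_X_X, map_add, map_smul, psi_lin b v ψ hψ, psi_lin b v ψ hψ,
    hψ p, hψ q, br_add_left, br_add_right, br_add_right, br_smul_left, br_smul_right,
    br_smul_right, br_smul_left, br_X_X, br_X_X, br_X_X, br_X_X]
  have e1 : p.2 + 1 + q.2 + 0 = p.2 + q.2 + 1 := by omega
  have e2 : p.2 + 1 + (q.2 + 1) + 0 = p.2 + q.2 + 1 + 1 := by omega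
  have e3 : p.2 + (q.2 + 1) + 0 = p.2 + q.2 + 1 := by omega
  rw [e1, e2, e3]
  simp only [smul_add, smul_smul]

lemma keyX (p : ι × ℕ) (g : MvPolynomial (ι × ℕ) ℂ) :
    ψ (br b 0 (X p) g + v • br b 1 (X p) g) = br b 0 (ψ (X p)) (ψ g) := by
  induction g using MvPolynomial.induction_on with
  | C c =>
    rw [br_C_right, br_C_right, smul_zero, add_zero, map_zero, psi_C, br_C_right]
  | add g₁ g₂ ih₁ ih₂ =>
    rw [br_add_right, br_add_right, smul_add,
      show ∀ A B C D : MvPolynomial (ι × ℕ) ℂ, A + B + (v • C + v • D)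
        = A + v • C + (B + v • D) from fun A B C D => by abel,
      map_add, ih₁, ih₂, map_add ψ g₁ g₂, br_add_right]
  | mul_X g₁ q ih =>
    rw [br_mul_right, br_mul_right, map_mul, br_mul_right,
      show ∀ A B C D : MvPolynomial (ι × ℕ) ℂ, g₁ * A + X q * B + v • (g₁ * C + X q * D)
        = g₁ * (A + v • C) + X q * (B + v • D) from fun A B C D => by
          simp only [smul_add, mul_add, mul_smul_comm]; abel,
      map_add, map_mul, map_mul, ih, keyXX b v ψ hψ]

lemma key (f g : MvPolynomial (ι × ℕ) ℂ) :
    ψ (br b 0 f g + v • br b 1 f g) = br b 0 (ψ f) (ψ g) := by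
  induction f using MvPolynomial.induction_on with
  | C c =>
    rw [br_C_left, br_C_left, smul_zero, add_zero, map_zero, psi_C, br_C_left]
  | add f₁ f₂ ih₁ ih₂ =>
    rw [br_add_left, br_add_left, smul_add,
      show ∀ A B C D : MvPolynomial (ι × ℕ) ℂ, A + B + (v • C + v • D)
        = A + v • C + (B + v • D) from fun A B C D => by abel,
      map_add, ih₁, ih₂, map_add ψ f₁ f₂, br_add_left]
  | mul_X f₁ p ih =>
    rw [br_mul_left, br_mul_left, map_mul, br_mul_left,
      show ∀ A B C D : MvPolynomial (ι × ℕ) ℂ, f₁ * A + X p * B + v • (f₁ * C + X p * D)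
        = f₁ * (A + v • C) + X p * (B + v • D) from fun A B C D => by
          simp only [smul_add, mul_add, mul_smul_comm]; abel,
      map_add, map_mul, map_mul, ih, keyX b v ψ hψ]

end Psi

/-- The map `φ_{1,v} : x[m] ↦ x[m] + Σ_{k≥1} (-1)ᵏ vᵏ x[m+k]`
is a Poisson algebra isomorphism `(S(𝔤[[t]]), {·,·}₀) → (S(𝔤[[t]]), {·,·}₀ + v{·,·}₁)`
with inverse `ψ_v : x[m] ↦ x[m] + v·x[m+1]`.  Since `S(𝔤[[t]])` is the
completion of `S(𝔤[t])` with respect to the (Poisson) ideals generated by the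
variables of `t`-degree `> N`, this is expressed on `S(𝔤[t])` as: the algebra
endomorphism `ψ_v` (a) intertwines the bracket `{·,·}₀ + v{·,·}₁` with
`{·,·}₀`, (b) is injective, and (c) has dense image: any `f` agrees with some
`ψ_v g` modulo the ideal generated by the variables `x_a[k]`, `k > N`; hence
`ψ_v` extends to a bijection of the completion, whose inverse is `φ_{1,v}`. -/
theorem statement5 {ι L : Type*} [DecidableEq ι] [LieRing L] [LieAlgebra ℂ L]
    (b : Module.Basis ι ℂ L) (v : ℂ) :
    let ψ : MvPolynomial (ι × ℕ) ℂ →ₐ[ℂ] MvPolynomial (ι × ℕ) ℂ :=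
      aeval fun p : ι × ℕ =>
        (X p : MvPolynomial (ι × ℕ) ℂ) + v • X (p.1, p.2 + 1)
    (∀ f g, ψ (br b 0 f g + v • br b 1 f g) = br b 0 (ψ f) (ψ g)) ∧
    Function.Injective ψ ∧
    (∀ (f : MvPolynomial (ι × ℕ) ℂ) (N : ℕ), ∃ g,
      f - ψ g ∈ Ideal.span
        {q : MvPolynomial (ι × ℕ) ℂ | ∃ p : ι × ℕ, N < p.2 ∧ q = X p}) := by
  intro ψ
  have hψ : ∀ p : ι × ℕ, ψ (X p) = X p + v • X (p.1, p.2 + 1) := fun p => aeval_X _ p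
  refine ⟨key b v ψ hψ, ?_, ?_⟩
  · -- injectivity
    rw [injective_iff_map_eq_zero]
    intro f hf
    set N : ℕ := f.vars.sup Prod.snd with hN
    set σf : MvPolynomial (ι × ℕ) ℂ →ₐ[ℂ] MvPolynomial (ι × ℕ) ℂ :=
      aeval fun p : ι × ℕ => ∑ k ∈ Finset.range (N + 1), (-v) ^ k • X (p.1, p.2 + k) with hσ
    set π : MvPolynomial (ι × ℕ) ℂ →ₐ[ℂ] MvPolynomial (ι × ℕ) ℂ :=
      aeval fun p : ι × ℕ => if p.2 ≤ N then X p else 0 with hπ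
    have hσψ : ∀ p : ι × ℕ,
        σf (ψ (X p)) = X p - (-v) ^ (N + 1) • X (p.1, p.2 + N + 1) := by
      intro p
      rw [hψ, map_add, map_smul, hσ, aeval_X, aeval_X]
      have e : ∀ k : ℕ, (((p.1, p.2 + 1).1, (p.1, p.2 + 1).2 + k) : ι × ℕ)
          = (p.1, p.2 + (k + 1)) := fun k => by simp; omega
      simp_rw [e]
      have := tele v N (fun j => (X (p.1, p.2 + j) : MvPolynomial (ι × ℕ) ℂ))
      simpa [← add_assoc] using this
    have hcomp : ∀ i ∈ f.vars, π (σf (ψ (X i))) = X i := by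
      intro i hi
      have hi2 : i.2 ≤ N := Finset.le_sup (f := Prod.snd) hi
      rw [hσψ, map_sub, map_smul, hπ, aeval_X, aeval_X]
      rw [if_pos hi2, if_neg (by simp), smul_zero, sub_zero]
    have hff : π (σf (ψ f)) = f := by
      have h := MvPolynomial.hom_congr_vars
        (f₁ := ((π.comp (σf.comp ψ)) : MvPolynomial (ι × ℕ) ℂ →ₐ[ℂ] _).toRingHom)
        (f₂ := RingHom.id (MvPolynomial (ι × ℕ) ℂ)) (p₁ := f) (p₂ := f)
        (RingHom.ext fun c => by
          simp only [RingHom.comp_apply, RingHom.id_apply, AlgHom.toRingHom_eq_coe,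
            RingHom.coe_coe, AlgHom.comp_apply]
          rw [psi_C, psi_C, psi_C])
        (fun i hi _ => by
          simpa only [AlgHom.toRingHom_eq_coe, RingHom.coe_coe, AlgHom.comp_apply,
            RingHom.id_apply] using hcomp i hi)
        rfl
      simpa only [AlgHom.toRingHom_eq_coe, RingHom.coe_coe, AlgHom.comp_apply,
        RingHom.id_apply] using h
    rw [hf, map_zero, map_zero] at hff
    exact hff.symm
  · -- density
    intro f N
    set φ : MvPolynomial (ι × ℕ) ℂ →ₐ[ℂ] MvPolynomial (ι × ℕ) ℂ :=
      aeval fun p : ι × ℕ => ∑ k ∈ Finset.range (N + 1), (-v) ^ k • X (p.1, p.2 + k) with hφ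
    refine ⟨φ f, ?_⟩
    set I := Ideal.span {q : MvPolynomial (ι × ℕ) ℂ | ∃ p : ι × ℕ, N < p.2 ∧ q = X p} with hI
    rw [← Ideal.Quotient.eq]
    have hmain : (Ideal.Quotient.mkₐ ℂ I).comp (ψ.comp φ) = Ideal.Quotient.mkₐ ℂ I := by
      apply MvPolynomial.algHom_ext
      intro p
      simp only [AlgHom.comp_apply]
      have hψφ : ψ (φ (X p)) = X p - (-v) ^ (N + 1) • X (p.1, p.2 + N + 1) := by
        rw [hφ, aeval_X, map_sum]
        simp_rw [map_smul, hψ, smul_add]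
        rw [Finset.sum_add_distrib]
        have e : ∀ k : ℕ,
            ((-v) ^ k • (v • (X (((p.1, p.2 + k).1, (p.1, p.2 + k).2 + 1) : ι × ℕ)
              : MvPolynomial (ι × ℕ) ℂ)))
            = v • ((-v) ^ k • X ((p.1, p.2 + (k + 1)) : ι × ℕ)) := fun k => smul_comm _ _ _
        simp_rw [e]
        rw [← Finset.smul_sum]
        have := tele v N (fun j => (X (p.1, p.2 + j) : MvPolynomial (ι × ℕ) ℂ))
        simpa [← add_assoc] using this
      rw [hψφ, map_sub, map_smul]
      have hz : Ideal.Quotient.mkₐ ℂ I (X ((p.1, p.2 + N + 1) : ι × ℕ) :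
          MvPolynomial (ι × ℕ) ℂ) = 0 := by
        rw [Ideal.Quotient.mkₐ_eq_mk, Ideal.Quotient.eq_zero_iff_mem, hI]
        exact Ideal.subset_span ⟨(p.1, p.2 + N + 1), by omega, rfl⟩
      rw [hz, smul_zero, sub_zero]
    have := DFunLike.congr_fun hmain f
    simpa only [AlgHom.comp_apply, Ideal.Quotient.mkₐ_eq_mk] using this.symm
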